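/- Let n ≥ 1, m ≥ 2, T ≥ 3. Let φ(y) = −Σ_{k=1}^m log(y(k)) be the log-barrier, let ũ^(1),…,ũ^(T) ∈ ℝ^m with ‖ũ^(s)‖_∞ ≤ 1, let x̂^(1),…,x̂^(T) ∈ Δ_m with conventions x̂^(0) = x̂^(−1) = 0 and ũ_a^(0) = 0, and for each a ∈ {1,…,m} set ũ_a^(s) = x̂^(s)(a)·ũ^(s), η_a^(t) = min{ √( (m log T / 8) / ( 4 + Σ_{s=1}^{t−1} ‖ũ_a^(s) − ũ_a^(s−1)‖_∞² ) ), 1/(256 n √m) }, and let y_a^(t) be the maximizer over Δ_m of y ↦ ⟨y, ũ_a^(t−1) + Σ_{s=1}^{t−1} ũ_a^(s)⟩ − φ(y)/η_a^(t). Then for every t with 1 ≤ t ≤ T−1: Σ_{a=1}^m (η_a^(t+1))^{−1/2} ‖y_a^(t+1) − y_a^(t)‖_{y_a^(t),φ} ≤ 1/2, where ‖h‖_{y,φ} = √( Σ_k h(k)²/y(k)² ). -/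

import Mathlib

open Finset

noncomputable section

/-- The `(d-1)`-dimensional probability simplex in `ℝ^d`. -/
def simplex (d : ℕ) : Set (Fin d → ℝ) :=
  {x | (∀ k, 0 ≤ x k) ∧ ∑ k, x k = 1}

/-- Standard inner product on `ℝ^d`. -/
def inp {d : ℕ} (u v : Fin d → ℝ) : ℝ := ∑ k, u k * v k

/-- `ℓ¹` norm. -/
def l1 {d : ℕ} (v : Fin d → ℝ) : ℝ := ∑ k, |v k|

/-- `ℓ∞` norm. -/
def linf {d : ℕ} (v : Fin d → ℝ) : ℝ := ⨆ k, |v k|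

/-- Matrix-vector product `A y`. -/
def mvec {d e : ℕ} (A : Fin d → Fin e → ℝ) (v : Fin e → ℝ) : Fin d → ℝ :=
  fun i => ∑ j, A i j * v j

/-- Transposed matrix-vector product `Aᵀ x`. -/
def tvec {d e : ℕ} (A : Fin d → Fin e → ℝ) (v : Fin d → ℝ) : Fin e → ℝ :=
  fun j => ∑ i, A i j * v i

/-- Row-stochastic matrices. -/
def rowStoch {m : ℕ} (M : Fin m → Fin m → ℝ) : Prop :=
  ∀ a, M a ∈ simplex m

/-- Shannon entropy. -/
def shannonH {d : ℕ} (x : Fin d → ℝ) : ℝ := ∑ k, x k * Real.log (1 / x k)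

/-- Log-barrier regularizer. -/
def logBarrier {d : ℕ} (x : Fin d → ℝ) : ℝ := -∑ k, Real.log (x k)

/-- Local norm `‖h‖_{x,φ}` induced by the Hessian of the log-barrier at `x`. -/
def locNorm {d : ℕ} (x h : Fin d → ℝ) : ℝ := Real.sqrt (∑ k, (h k) ^ 2 / (x k) ^ 2)

/-- Dual local norm `‖h‖_{*,x,φ}` for the log-barrier at `x`. -/
def dualLocNorm {d : ℕ} (x h : Fin d → ℝ) : ℝ := Real.sqrt (∑ k, (x k) ^ 2 * (h k) ^ 2)

/-- `log₊ z = max (log z) 4`. -/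
def logp (z : ℕ) : ℝ := max (Real.log z) 4

def nrm2 {m : ℕ} (f : Fin m → ℝ) : ℝ := Real.sqrt (∑ k, (f k)^2)

lemma nrm2_nonneg {m : ℕ} (f : Fin m → ℝ) : 0 ≤ nrm2 f := Real.sqrt_nonneg _

lemma sq_nrm2 {m : ℕ} (f : Fin m → ℝ) : (nrm2 f)^2 = ∑ k, (f k)^2 :=
  Real.sq_sqrt (Finset.sum_nonneg fun k _ => sq_nonneg _)

lemma nrm2_le {m : ℕ} (f g : Fin m → ℝ) (h : ∀ k, (f k)^2 ≤ (g k)^2) : nrm2 f ≤ nrm2 g :=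
  Real.sqrt_le_sqrt (Finset.sum_le_sum fun k _ => h k)

lemma sum_mul_le_nrm2 {m : ℕ} (p q : Fin m → ℝ) : ∑ k, p k * q k ≤ nrm2 p * nrm2 q := by
  have cs := Finset.sum_mul_sq_le_sq_mul_sq Finset.univ p q
  have h1 : ∑ k, p k * q k ≤ |∑ k, p k * q k| := le_abs_self _
  have h2 : |∑ k, p k * q k| = Real.sqrt ((∑ k, p k * q k)^2) := (Real.sqrt_sq_eq_abs _).symm
  have h3 : Real.sqrt ((∑ k, p k * q k)^2) ≤ Real.sqrt ((∑ k, (p k)^2) * ∑ k, (q k)^2) :=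
    Real.sqrt_le_sqrt cs
  have h4 : Real.sqrt ((∑ k, (p k)^2) * ∑ k, (q k)^2) = nrm2 p * nrm2 q := by
    rw [Real.sqrt_mul (Finset.sum_nonneg fun k _ => sq_nonneg _)]; rfl
  linarith
lemma nrm2_comb {m : ℕ} (b c : ℝ) (hb : 0 ≤ b) (hc : 0 ≤ c) (p q : Fin m → ℝ) :
    nrm2 (fun k => b * p k + c * q k) ≤ b * nrm2 p + c * nrm2 q := by
  have hpq := sum_mul_le_nrm2 p q
  have expand : ∑ k, (b * p k + c * q k)^2
      = b^2 * ∑ k, (p k)^2 + 2*b*c*(∑ k, p k * q k) + c^2 * ∑ k, (q k)^2 := by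
    rw [Finset.mul_sum, Finset.mul_sum, Finset.mul_sum, ← Finset.sum_add_distrib,
      ← Finset.sum_add_distrib]
    exact Finset.sum_congr rfl fun k _ => by ring
  have key : ∑ k, (b * p k + c * q k)^2 ≤ (b * nrm2 p + c * nrm2 q)^2 := by
    have e1 := sq_nrm2 p; have e2 := sq_nrm2 q
    nlinarith [mul_le_mul_of_nonneg_left hpq (mul_nonneg hb hc)]
  have := Real.sqrt_le_sqrt key
  rwa [Real.sqrt_sq (add_nonneg (mul_nonneg hb (nrm2_nonneg p)) (mul_nonneg hc (nrm2_nonneg q)))] at this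

lemma kkt {m : ℕ} (hm : 0 < m) {η : ℝ} (hη : 0 < η) (G y : Fin m → ℝ)
    (hy1 : ∑ k, y k = 1) (hy2 : ∀ k, 0 < y k)
    (hmax : ∀ z ∈ simplex m, (∀ k, 0 < z k) →
      inp z G - logBarrier z / η ≤ inp y G - logBarrier y / η) :
    ∃ lam : ℝ, ∀ k, 1 / y k = lam - η * G k := by
  have key : ∀ k l : Fin m, G k + 1 / (η * y k) = G l + 1 / (η * y l) := by
    intro k l
    rcases eq_or_ne k l with rfl | hkl
    · rfl
    set v : Fin m → ℝ := fun j => (if j = k then (1:ℝ) else 0) - (if j = l then 1 else 0) with hv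
    set F : ℝ → ℝ := fun s =>
      inp (fun j => y j + s * v j) G - logBarrier (fun j => y j + s * v j) / η with hF
    have hr : 0 < min (y k) (y l) := lt_min (hy2 k) (hy2 l)
    have hvsum : ∑ j, v j = 0 := by
      simp [hv, Finset.sum_sub_distrib]
    have hpos : ∀ s : ℝ, |s| < min (y k) (y l) → ∀ j, 0 < y j + s * v j := by
      intro s hs j
      have h1 : |s| < y k := lt_of_lt_of_le hs (min_le_left _ _)
      have h2 : |s| < y l := lt_of_lt_of_le hs (min_le_right _ _)
      rcases eq_or_ne j k with rfl | hjk
      · have : v j = 1 := by simp [hv, hkl]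
        rw [this]; have := neg_abs_le s; nlinarith
      rcases eq_or_ne j l with rfl | hjl
      · have : v j = -1 := by simp [hv, hjk]
        rw [this]; have := le_abs_self s; nlinarith
      · have : v j = 0 := by simp [hv, hjk, hjl]
        rw [this]; simpa using hy2 j
    have hloc : IsLocalMax F 0 := by
      have hev : ∀ᶠ s in nhds (0:ℝ), |s - 0| < min (y k) (y l) :=
        eventually_abs_sub_lt 0 hr
      refine hev.mono fun s hs => ?_
      rw [sub_zero] at hs
      have hmem : (fun j => y j + s * v j) ∈ simplex m := by
        constructor
        · exact fun j => (hpos s hs j).le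
        · rw [Finset.sum_add_distrib, hy1, ← Finset.mul_sum, hvsum]; ring
      have := hmax _ hmem (hpos s hs)
      simpa [hF] using this
    have hd1 : HasDerivAt (fun s : ℝ => inp (fun j => y j + s * v j) G) (inp v G) 0 := by
      have : ∀ j : Fin m, HasDerivAt (fun s : ℝ => (y j + s * v j) * G j) (v j * G j) 0 := by
        intro j
        have h := ((hasDerivAt_id (0:ℝ)).mul_const (v j)).const_add (y j)
        simpa using h.mul_const (G j)
      simpa [inp] using HasDerivAt.fun_sum (fun j _ => this j)
    have hd2 : HasDerivAt (fun s : ℝ => logBarrier (fun j => y j + s * v j))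
        (-∑ j, v j / y j) 0 := by
      have : ∀ j : Fin m, HasDerivAt (fun s : ℝ => Real.log (y j + s * v j)) (v j / y j) 0 := by
        intro j
        have h := ((hasDerivAt_id (0:ℝ)).mul_const (v j)).const_add (y j)
        have h2 := h.log (by simpa using (hy2 j).ne')
        simpa using h2
      have hsum := HasDerivAt.fun_sum (fun j (_ : j ∈ Finset.univ) => this j)
      have := hsum.fun_neg
      simpa [logBarrier] using this
    have hd : HasDerivAt F (inp v G - (-∑ j, v j / y j) / η) 0 := hd1.sub (hd2.div_const η)
    have hzero := hloc.hasDerivAt_eq_zero hd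
    have hvG : inp v G = G k - G l := by
      simp [inp, hv, sub_mul, Finset.sum_sub_distrib]
    have hvy : ∑ j, v j / y j = 1 / y k - 1 / y l := by
      simp [hv, sub_mul, Finset.sum_sub_distrib, one_div, div_eq_mul_inv, ite_mul, one_mul, zero_mul, Finset.sum_ite_eq']
    rw [hvG, hvy] at hzero
    have hyk := (hy2 k).ne'
    have hyl := (hy2 l).ne'
    field_simp at hzero ⊢
    nlinarith [hzero]
  obtain ⟨k0⟩ : Nonempty (Fin m) := ⟨⟨0, hm⟩⟩
  refine ⟨η * (G k0 + 1 / (η * y k0)), fun k => ?_⟩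
  have h := key k k0
  have hyk := (hy2 k).ne'
  field_simp at h ⊢
  nlinarith [h]

lemma nrm2_smul {m : ℕ} (c : ℝ) (f : Fin m → ℝ) :
    nrm2 (fun k => c * f k) = |c| * nrm2 f := by
  unfold nrm2
  rw [show (∑ k, (c * f k)^2) = c^2 * ∑ k, (f k)^2 by
    rw [Finset.mul_sum]; exact Finset.sum_congr rfl fun k _ => by ring]
  rw [Real.sqrt_mul (sq_nonneg c), Real.sqrt_sq_eq_abs]

set_option maxHeartbeats 1000000 in
lemma stab {m : ℕ} (hm : 1 ≤ m) (y y' : Fin m → ℝ)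
    (hy2 : ∀ k, 0 < y k) (hy1 : ∑ k, y k = 1)
    (hy2' : ∀ k, 0 < y' k) (hy1' : ∑ k, y' k = 1)
    {η η' : ℝ} (hη' : 0 < η') (hle : η' ≤ η)
    {G G' : Fin m → ℝ} {lam lam' : ℝ}
    (hk : ∀ k, 1 / y k = lam - η * G k)
    (hk' : ∀ k, 1 / y' k = lam' - η' * G' k)
    {D : ℝ} (hD : ∀ k, |G' k - G k| ≤ D) :
    locNorm y (y' - y) * (1 - (1 - η'/η) * (1 + Real.sqrt m))
      ≤ (1 - η'/η) * ((m : ℝ) + Real.sqrt m) + 2 * η' * D := by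
  haveI : Nonempty (Fin m) := ⟨⟨0, hm⟩⟩
  have hη0 : 0 < η := hη'.trans_le hle
  set ρ : ℝ := η'/η with hρdef
  have hρη : ρ * η = η' := div_mul_cancel₀ _ hη0.ne'
  set β : ℝ := 1 - ρ with hβdef
  have hβ0 : 0 ≤ β := by
    have : ρ ≤ 1 := (div_le_one hη0).mpr hle
    simp [hβdef]; linarith
  set Δ : Fin m → ℝ := fun k => G' k - G k with hΔdef
  set u : Fin m → ℝ := fun k => y' k / y k - 1 with hudef
  set w : Fin m → ℝ := fun k => y k * y' k with hwdef
  have wpos : ∀ k, 0 < w k := fun k => mul_pos (hy2 k) (hy2' k)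
  set W : ℝ := ∑ k, w k with hWdef
  have hW : 0 < W := Finset.sum_pos (fun k _ => wpos k) univ_nonempty
  set A : ℝ := (∑ k, w k * Δ k) / W with hAdef
  have hD0 : 0 ≤ D := (abs_nonneg _).trans (hD (Classical.arbitrary _))
  have key : ∀ k, 1/y' k - 1/y k = (lam' - ρ*lam) - β*(1/y k) - η'*Δ k := by
    intro k
    rw [hk, hk']
    simp only [hΔdef, hβdef]
    linear_combination (G k) * hρη
  have sum0 : ∑ k, w k * (1/y k - 1/y' k) = 0 := by
    have h : ∀ k ∈ Finset.univ, w k * (1/y k - 1/y' k) = y' k - y k := fun k _ => by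
      have e1 := (hy2 k).ne'
      have e2 := (hy2' k).ne'
      show y k * y' k * (1/y k - 1/y' k) = y' k - y k
      field_simp
    rw [Finset.sum_congr rfl h, Finset.sum_sub_distrib, hy1, hy1']
    ring
  have sumwc : ∑ k, w k * (1/y k) = 1 := by
    have h : ∀ k ∈ Finset.univ, w k * (1/y k) = y' k := fun k _ => by
      have e1 := (hy2 k).ne'
      show y k * y' k * (1/y k) = y' k
      field_simp
    rw [Finset.sum_congr rfl h, hy1']
  have lamval : (lam' - ρ*lam) * W = β + η' * (∑ k, w k * Δ k) := by
    have h2 : (0:ℝ) = β * (∑ k, w k * (1/y k)) + η' * (∑ k, w k * Δ k)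
        - (lam'-ρ*lam) * W := by
      rw [← sum0, hWdef, Finset.mul_sum, Finset.mul_sum, Finset.mul_sum,
        ← Finset.sum_add_distrib, ← Finset.sum_sub_distrib]
      refine Finset.sum_congr rfl fun k _ => ?_
      linear_combination (-(w k)) * key k
    rw [sumwc] at h2
    linarith
  have hA : |A| ≤ D := by
    have h1 : |∑ k, w k * Δ k| ≤ ∑ k, w k * D := by
      refine (Finset.abs_sum_le_sum_abs _ _).trans (Finset.sum_le_sum fun k _ => ?_)
      rw [abs_mul, abs_of_pos (wpos k)]
      exact mul_le_mul_of_nonneg_left (hD k) (wpos k).le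
    have h2 : ∑ k, w k * D = W * D := by rw [hWdef, Finset.sum_mul]
    rw [hAdef, abs_div, abs_of_pos hW, div_le_iff₀ hW]
    rw [h2] at h1
    linarith [h1]
  have lamval2 : lam' - ρ*lam = β/W + η'*A := by
    rw [hAdef]
    field_simp
    linear_combination lamval
  have uform : ∀ k, u k = β*(y' k * (1/y k - 1/W)) + η'*(y' k * (Δ k - A)) := by
    intro k
    have h1 : u k = y' k * (1/y k - 1/y' k) := by
      have e1 := (hy2 k).ne'
      have e2 := (hy2' k).ne'
      show y' k / y k - 1 = y' k * (1/y k - 1/y' k)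
      field_simp
    rw [h1]
    linear_combination (-(y' k)) * key k + (-(y' k)) * lamval2
  set N := nrm2 u with hNdef
  have hN0 : 0 ≤ N := nrm2_nonneg u
  have hlocN : locNorm y (y' - y) = N := by
    rw [hNdef]
    unfold locNorm nrm2
    congr 1
    refine Finset.sum_congr rfl fun k _ => ?_
    have hyk := (hy2 k).ne'
    show (y' k - y k)^2 / (y k)^2 = (y' k / y k - 1)^2
    field_simp
  have step1 : N ≤ β * nrm2 (fun k => y' k * (1/y k - 1/W))
      + η' * nrm2 (fun k => y' k * (Δ k - A)) := by
    have hfun : u = fun k => β*(y' k*(1/y k - 1/W)) + η'*(y' k*(Δ k - A)) := funext uform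
    rw [hNdef, hfun]
    exact nrm2_comb β η' hβ0 hη'.le _ _
  have hy'le1 : ∀ k, y' k ≤ 1 := fun k => by
    rw [← hy1']
    exact Finset.single_le_sum (fun j _ => (hy2' j).le) (Finset.mem_univ k)
  have sumy'sq : ∑ k, (y' k)^2 ≤ 1 := by
    rw [← hy1']
    exact Finset.sum_le_sum fun k _ => by nlinarith [hy2' k, hy'le1 k]
  have nrm2y' : nrm2 y' ≤ 1 := by
    have := Real.sqrt_le_sqrt sumy'sq
    simpa [nrm2] using this
  have stepQ : nrm2 (fun k => y' k * (Δ k - A)) ≤ 2*D := by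
    have h : ∀ k, (y' k * (Δ k - A))^2 ≤ (y' k * (2*D))^2 := by
      intro k
      have habs : |y' k * (Δ k - A)| ≤ y' k * (2*D) := by
        rw [abs_mul, abs_of_pos (hy2' k)]
        have : |Δ k - A| ≤ 2*D := (abs_sub _ _).trans (by linarith [hD k, hA])
        exact mul_le_mul_of_nonneg_left this (hy2' k).le
      calc (y' k * (Δ k - A))^2 = |y' k * (Δ k - A)|^2 := (sq_abs _).symm
        _ ≤ (y' k * (2*D))^2 := by
            have h0 : (0:ℝ) ≤ |y' k * (Δ k - A)| := abs_nonneg _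
            nlinarith
    refine (nrm2_le _ _ h).trans ?_
    have e : nrm2 (fun k => y' k * (2*D)) = nrm2 (fun k => (2*D) * y' k) := by
      congr 1; funext k; ring
    rw [e, nrm2_smul, abs_of_nonneg (by linarith : (0:ℝ) ≤ 2*D)]
    nlinarith [nrm2y', nrm2_nonneg y']
  have one_nrm : nrm2 (fun _ : Fin m => (1:ℝ)) = Real.sqrt m := by
    unfold nrm2
    simp [Finset.card_univ]
  have huy : nrm2 (fun k => y' k / y k) ≤ Real.sqrt m + N := by
    have hfun : (fun k => y' k / y k) = fun k => (1:ℝ) * ((fun _ : Fin m => (1:ℝ)) k) + 1 * (u k) := by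
      funext k
      show y' k / y k = 1 * 1 + 1 * (y' k / y k - 1)
      ring
    rw [hfun]
    have h := nrm2_comb 1 1 zero_le_one zero_le_one (fun _ => (1:ℝ)) u
    rw [one_nrm] at h
    calc nrm2 (fun k => (1:ℝ) * ((fun _ : Fin m => (1:ℝ)) k) + 1 * (u k))
        ≤ 1 * Real.sqrt m + 1 * nrm2 u := h
      _ = Real.sqrt m + N := by rw [hNdef]; ring
  have stepP : nrm2 (fun k => y' k * (1/y k - 1/W)) ≤ Real.sqrt m + N + 1/W := by
    have hfun : (fun k => y' k * (1/y k - 1/W))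
        = fun k => (1:ℝ) * ((fun j => y' j / y j) k) + (1/W) * ((fun j => -(y' j)) k) := by
      funext k
      show y' k * (1/y k - 1/W) = 1 * (y' k / y k) + (1/W) * (-(y' k))
      ring
    rw [hfun]
    have h := nrm2_comb 1 (1/W) zero_le_one (le_of_lt (one_div_pos.mpr hW)) (fun j => y' j / y j) (fun j => -(y' j))
    have hneg : nrm2 (fun j => -(y' j)) = nrm2 y' := by
      unfold nrm2; congr 1; exact Finset.sum_congr rfl fun k _ => by ring
    rw [hneg] at h
    refine h.trans ?_
    have h1 : (1/W) * nrm2 y' ≤ (1/W) * 1 := by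
      exact mul_le_mul_of_nonneg_left nrm2y' (le_of_lt (one_div_pos.mpr hW))
    linarith [huy, h1]
  have csW : 1 ≤ W * (∑ k, y' k / y k) := by
    have cs := Finset.sum_mul_sq_le_sq_mul_sq Finset.univ
      (fun k => Real.sqrt (w k)) (fun k => Real.sqrt (y' k / y k))
    have h1 : ∀ k ∈ Finset.univ, Real.sqrt (w k) * Real.sqrt (y' k / y k) = y' k := by
      intro k _
      rw [← Real.sqrt_mul (wpos k).le]
      rw [show w k * (y' k / y k) = (y' k)^2 by
        have e1 := (hy2 k).ne'
        show y k * y' k * (y' k / y k) = (y' k)^2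
        field_simp]
      exact Real.sqrt_sq (hy2' k).le
    have h2 : ∀ k ∈ Finset.univ, (Real.sqrt (w k))^2 = w k := fun k _ =>
      Real.sq_sqrt (wpos k).le
    have h3 : ∀ k ∈ Finset.univ, (Real.sqrt (y' k / y k))^2 = y' k / y k := fun k _ =>
      Real.sq_sqrt (div_nonneg (hy2' k).le (hy2 k).le)
    rw [Finset.sum_congr rfl h1, Finset.sum_congr rfl h2, Finset.sum_congr rfl h3, hy1'] at cs
    simpa using cs
  have sumu : ∑ k, u k ≤ Real.sqrt m * N := by
    have h := sum_mul_le_nrm2 u (fun _ => (1:ℝ))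
    rw [one_nrm] at h
    have e : ∑ k, u k * 1 = ∑ k, u k := by simp
    rw [e] at h
    linarith
  have hWinv : 1/W ≤ (m:ℝ) + Real.sqrt m * N := by
    have h4 : ∑ k, y' k / y k = (m:ℝ) + ∑ k, u k := by
      have hfun : ∀ k ∈ Finset.univ, y' k / y k = 1 + u k := fun k _ => by
        simp [hudef]
      rw [Finset.sum_congr rfl hfun, Finset.sum_add_distrib]
      simp [Finset.card_univ]
    rw [h4] at csW
    rw [div_le_iff₀ hW]
    nlinarith [csW, sumu, hW]
  have hP2 : nrm2 (fun k => y' k * (1/y k - 1/W))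
      ≤ Real.sqrt m + N + ((m:ℝ) + Real.sqrt m * N) := by
    refine stepP.trans ?_
    linarith [hWinv]
  have main : N ≤ β*(Real.sqrt m + N + ((m:ℝ) + Real.sqrt m * N)) + η'*(2*D) := by
    refine step1.trans ?_
    exact add_le_add (mul_le_mul_of_nonneg_left hP2 hβ0)
      (mul_le_mul_of_nonneg_left stepQ hη'.le)
  rw [hlocN]
  nlinarith [main]

lemma eta_facts {Q cap S ε : ℝ} (hQ : 0 < Q) (hcap : 0 < cap) (hS : 0 ≤ S) (hε : 0 ≤ ε)
    {η1 η2 : ℝ} (h1 : η1 = min (Real.sqrt (Q/(4+S))) cap)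
    (h2 : η2 = min (Real.sqrt (Q/(4+S+ε))) cap) :
    0 < η2 ∧ η2 ≤ η1 ∧ η2 ≤ cap ∧ (1 - η2/η1) * Q ≤ ε * η2^2 := by
  have h4S : (0:ℝ) < 4 + S := by linarith
  have h4Sε : (0:ℝ) < 4 + S + ε := by linarith
  have hsq2 : 0 < Real.sqrt (Q/(4+S+ε)) := Real.sqrt_pos.mpr (by positivity)
  have hsq1pos : 0 < Real.sqrt (Q/(4+S)) := Real.sqrt_pos.mpr (by positivity)
  have hη2pos : 0 < η2 := by rw [h2]; exact lt_min hsq2 hcap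
  have hdivle : Q/(4+S+ε) ≤ Q/(4+S) := by
    apply div_le_div_of_nonneg_left hQ.le h4S
    linarith
  have hmono : Real.sqrt (Q/(4+S+ε)) ≤ Real.sqrt (Q/(4+S)) := Real.sqrt_le_sqrt hdivle
  have hη1pos : 0 < η1 := by rw [h1]; exact lt_min hsq1pos hcap
  have hη21 : η2 ≤ η1 := by rw [h1, h2]; exact min_le_min hmono le_rfl
  have hη2cap : η2 ≤ cap := by rw [h2]; exact min_le_right _ _
  refine ⟨hη2pos, hη21, hη2cap, ?_⟩
  rcases min_cases (Real.sqrt (Q/(4+S+ε))) cap with ⟨he, hle⟩ | ⟨he, hlt⟩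
  · have hη2eq : η2 = Real.sqrt (Q/(4+S+ε)) := by rw [h2]; exact he
    have hsq : η2^2 = Q/(4+S+ε) := by rw [hη2eq]; exact Real.sq_sqrt (by positivity)
    have hub : η1 ≤ Real.sqrt (Q/(4+S)) := by rw [h1]; exact min_le_left _ _
    have e0 : (Q/(4+S+ε))/(Q/(4+S)) = (4+S)/(4+S+ε) := by
      field_simp
    have e : η2 / Real.sqrt (Q/(4+S)) = Real.sqrt ((4+S)/(4+S+ε)) := by
      rw [hη2eq, ← Real.sqrt_div (by positivity), e0]
    have hratio : Real.sqrt ((4+S)/(4+S+ε)) ≤ η2/η1 := by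
      rw [← e]
      exact div_le_div_of_nonneg_left hη2pos.le hη1pos hub
    have hz : (4+S)/(4+S+ε) ≤ Real.sqrt ((4+S)/(4+S+ε)) := by
      have hz1 : (4+S)/(4+S+ε) ≤ 1 := by rw [div_le_one h4Sε]; linarith
      have hz0 : (0:ℝ) ≤ (4+S)/(4+S+ε) := by positivity
      nlinarith [Real.sq_sqrt hz0, Real.sqrt_nonneg ((4+S)/(4+S+ε))]
    have hb : 1 - η2/η1 ≤ ε/(4+S+ε) := by
      have h5 : (4+S)/(4+S+ε) ≤ η2/η1 := le_trans hz hratio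
      have e2 : 1 - (4+S)/(4+S+ε) = ε/(4+S+ε) := by field_simp; ring
      linarith
    have e3 : ε/(4+S+ε)*Q = ε*η2^2 := by rw [hsq]; ring
    have h6 := mul_le_mul_of_nonneg_right hb hQ.le
    linarith [h6, e3.le, e3.ge]
  · have hη2eq : η2 = cap := by rw [h2]; exact he
    have hη1eq : η1 = cap := by
      rw [h1]
      exact min_eq_right (le_of_lt (lt_of_lt_of_le hlt hmono))
    rw [hη2eq, hη1eq, div_self hcap.ne']
    have h7 : (0:ℝ) ≤ ε * cap^2 := mul_nonneg hε (sq_nonneg _)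
    linarith

set_option maxHeartbeats 8000000

/-- stability of the OFTRL (log-barrier, adaptive learning rate)
transition rows of the Markov chain (Lemma `diff_local_oftrl`). -/
theorem oftrl_logbarrier_markov_stability
    (n m T : ℕ) (hn : 1 ≤ n) (hm : 2 ≤ m) (hT : 3 ≤ T)
    (ut : ℕ → Fin m → ℝ) (hut : ∀ s ∈ Finset.Icc 1 T, linf (ut s) ≤ 1)
    (xhat : ℕ → Fin m → ℝ)
    (hxhat : ∀ t ∈ Finset.Icc 1 T, xhat t ∈ simplex m)
    (hxhat0 : xhat 0 = 0)
    (ua : Fin m → ℕ → Fin m → ℝ)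
    (hua : ∀ a s, ua a s = xhat s a • ut s)
    (η : Fin m → ℕ → ℝ)
    (hη : ∀ a t, η a t = min
      (Real.sqrt (((m : ℝ) * Real.log T / 8) /
        (4 + ∑ s ∈ Finset.Icc 1 (t - 1), (linf (ua a s - ua a (s - 1))) ^ 2)))
      (1 / (256 * (n : ℝ) * Real.sqrt m)))
    -- y_a⁽ᵗ⁾ is the (interior) maximizer of the OFTRL objective with log-barrier
    (y : Fin m → ℕ → Fin m → ℝ)
    (hy : ∀ a, ∀ t ∈ Finset.Icc 1 T,
      y a t ∈ simplex m ∧ (∀ k, 0 < y a t k) ∧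
      ∀ z ∈ simplex m, (∀ k, 0 < z k) →
        inp z (ua a (t - 1) + ∑ s ∈ Finset.Icc 1 (t - 1), ua a s) - logBarrier z / η a t
          ≤ inp (y a t) (ua a (t - 1) + ∑ s ∈ Finset.Icc 1 (t - 1), ua a s)
              - logBarrier (y a t) / η a t) :
    ∀ t ∈ Finset.Icc 1 (T - 1),
      ∑ a, (1 / Real.sqrt (η a (t + 1))) * locNorm (y a t) (y a (t + 1) - y a t)
        ≤ 1 / 2 := by
  intro t ht
  rw [Finset.mem_Icc] at ht
  obtain ⟨ht1, ht2⟩ := ht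
  have htT : t + 1 ≤ T := by omega
  have htT' : t ≤ T := by omega
  haveI : Nonempty (Fin m) := ⟨⟨0, by omega⟩⟩
  have hmR : (2:ℝ) ≤ (m:ℝ) := by exact_mod_cast hm
  have hmpos : (0:ℝ) < (m:ℝ) := by linarith
  have hn1 : (1:ℝ) ≤ (n:ℝ) := by exact_mod_cast hn
  have hsqm1 : 1 ≤ Real.sqrt m := by
    rw [show (1:ℝ) = Real.sqrt 1 from Real.sqrt_one.symm]
    exact Real.sqrt_le_sqrt (by linarith)
  set cap : ℝ := 1 / (256 * (n:ℝ) * Real.sqrt m) with hcapdef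
  have hcappos : 0 < cap := by
    rw [hcapdef]
    apply div_pos one_pos
    nlinarith
  have hcap256 : cap ≤ 1/256 := by
    rw [hcapdef]
    apply one_div_le_one_div_of_le (by norm_num)
    nlinarith
  clear_value cap
  have hsqcap : Real.sqrt cap ≤ 1/13 := by
    have h169 : cap ≤ (1/13:ℝ)^2 := hcap256.trans (by norm_num)
    have h := Real.sqrt_le_sqrt h169
    rwa [Real.sqrt_sq (by norm_num : (0:ℝ) ≤ 1/13)] at h
  have hsqcap0 : 0 ≤ Real.sqrt cap := Real.sqrt_nonneg _
  have hTpos : (0:ℝ) < (T:ℝ) := by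
    have : (3:ℝ) ≤ (T:ℝ) := by exact_mod_cast hT
    linarith
  have hlogT : 1 ≤ Real.log T := by
    rw [Real.le_log_iff_exp_le hTpos]
    have h1 : Real.exp 1 < 2.7182818286 := Real.exp_one_lt_d9
    have h2 : (3:ℝ) ≤ (T:ℝ) := by exact_mod_cast hT
    linarith
  set Q : ℝ := (m:ℝ) * Real.log T / 8 with hQdef
  have hQpos : 0 < Q := by rw [hQdef]; nlinarith
  clear_value Q
  have hQm8 : (m:ℝ)/8 ≤ Q := by rw [hQdef]; nlinarith
  -- coordinatewise bounds on ua
  have hua_abs : ∀ a k, ∀ s, s ≤ T → |ua a s k| ≤ xhat s a := by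
    intro a k s hs
    rcases Nat.eq_zero_or_pos s with rfl | hs1
    · rw [hua, hxhat0]
      simp
    · have hmem : s ∈ Finset.Icc 1 T := Finset.mem_Icc.mpr ⟨hs1, hs⟩
      rw [hua]
      rw [Pi.smul_apply, smul_eq_mul, abs_mul]
      have h1 : |ut s k| ≤ 1 := by
        refine le_trans ?_ (hut s hmem)
        exact le_ciSup (f := fun j => |ut s j|) (Set.Finite.bddAbove (Set.finite_range _)) k
      have h2 : 0 ≤ xhat s a := (hxhat s hmem).1 a
      rw [abs_of_nonneg h2]
      nlinarith
  have hxnn : ∀ s, s ≤ T → ∀ k, 0 ≤ xhat s k := by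
    intro s hs k
    rcases Nat.eq_zero_or_pos s with rfl | hs1
    · rw [hxhat0]; exact le_rfl
    · exact (hxhat s (Finset.mem_Icc.mpr ⟨hs1, hs⟩)).1 k
  have hxle1 : ∀ s, s ≤ T → ∀ k, xhat s k ≤ 1 := by
    intro s hs k
    rcases Nat.eq_zero_or_pos s with rfl | hs1
    · rw [hxhat0]; norm_num
    · have hmem := hxhat s (Finset.mem_Icc.mpr ⟨hs1, hs⟩)
      rw [← hmem.2]
      exact Finset.single_le_sum (fun j _ => hmem.1 j) (Finset.mem_univ k)
  set Sf : Fin m → ℝ := fun a => ∑ s ∈ Finset.Icc 1 (t-1), (linf (ua a s - ua a (s-1)))^2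
    with hSfdef
  set εf : Fin m → ℝ := fun a => (linf (ua a t - ua a (t-1)))^2 with hεfdef
  set Df : Fin m → ℝ := fun a => 2 * xhat t a + xhat (t-1) a with hDfdef
  have hSnn : ∀ a, 0 ≤ Sf a := fun a => Finset.sum_nonneg fun s _ => sq_nonneg _
  have hεnn : ∀ a, 0 ≤ εf a := fun a => sq_nonneg _
  clear_value Sf εf Df
  have hDnn : ∀ a, 0 ≤ Df a := fun a => by
    have := hxnn t htT' a
    have := hxnn (t-1) (by omega) a
    simp only [hDfdef]
    linarith
  have hlinf_ub : ∀ a, linf (ua a t - ua a (t-1)) ≤ xhat t a + xhat (t-1) a := by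
    intro a
    apply ciSup_le
    intro k
    rw [Pi.sub_apply]
    calc |ua a t k - ua a (t-1) k| ≤ |ua a t k| + |ua a (t-1) k| := abs_sub _ _
      _ ≤ xhat t a + xhat (t-1) a :=
        add_le_add (hua_abs a k t htT') (hua_abs a k (t-1) (by omega))
  have hε4 : ∀ a, εf a ≤ 4 := by
    intro a
    have h1 := hlinf_ub a
    have h2 : xhat t a + xhat (t-1) a ≤ 2 := by
      have := hxle1 t htT' a
      have := hxle1 (t-1) (by omega) a
      linarith
    have h3 : (0:ℝ) ≤ linf (ua a t - ua a (t-1)) :=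
      le_trans (abs_nonneg _) (le_ciSup (f := fun j => |(ua a t - ua a (t-1)) j|)
        (Set.Finite.bddAbove (Set.finite_range _)) (Classical.arbitrary (Fin m)))
    simp only [hεfdef]
    nlinarith
  have hεlin : ∀ a, εf a ≤ 2 * (xhat t a + xhat (t-1) a) := by
    intro a
    have h1 := hlinf_ub a
    have h2 : xhat t a + xhat (t-1) a ≤ 2 := by
      have := hxle1 t htT' a
      have := hxle1 (t-1) (by omega) a
      linarith
    have h3 : (0:ℝ) ≤ linf (ua a t - ua a (t-1)) :=
      le_trans (abs_nonneg _) (le_ciSup (f := fun j => |(ua a t - ua a (t-1)) j|)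
        (Set.Finite.bddAbove (Set.finite_range _)) (Classical.arbitrary (Fin m)))
    simp only [hεfdef]
    nlinarith
  have ht' : t - 1 + 1 = t := by omega
  -- per-a inequality
  have hper : ∀ a, (1/Real.sqrt (η a (t+1))) * locNorm (y a t) (y a (t+1) - y a t)
      ≤ (1024/1023) * (16 * (cap * Real.sqrt cap) * εf a + 2 * Real.sqrt cap * Df a) := by
    intro a
    -- learning-rate equations
    have e1 : η a t = min (Real.sqrt (Q/(4 + Sf a))) cap := by
      rw [hη a t, hSfdef]
    have hsplit0 : (∑ s ∈ Finset.Icc 1 t, (linf (ua a s - ua a (s-1)))^2) = Sf a + εf a := by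
      simp only [hSfdef, hεfdef]
      rw [← ht', Finset.sum_Icc_succ_top (by omega : 1 ≤ t - 1 + 1), ht']
    have e2 : η a (t+1) = min (Real.sqrt (Q/(4 + Sf a + εf a))) cap := by
      rw [hη a (t+1)]
      simp only [Nat.add_sub_cancel]
      rw [hsplit0, ← add_assoc]
    obtain ⟨hη2pos, hη21, hη2cap, hβQ⟩ :=
      eta_facts hQpos hcappos (hSnn a) (hεnn a) e1 e2
    have hη1pos : 0 < η a t := lt_of_lt_of_le hη2pos hη21
    -- optimizer data
    obtain ⟨hyt_mem, hyt_pos, hyt_max⟩ := hy a t (Finset.mem_Icc.mpr ⟨ht1, htT'⟩)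
    obtain ⟨hyt1_mem, hyt1_pos, hyt1_max⟩ := hy a (t+1) (Finset.mem_Icc.mpr ⟨by omega, htT⟩)
    rw [Nat.add_sub_cancel] at hyt1_max
    obtain ⟨lam1, hk1⟩ := kkt (by omega : 0 < m) hη1pos _ _ hyt_mem.2 hyt_pos hyt_max
    obtain ⟨lam2, hk2⟩ := kkt (by omega : 0 < m) hη2pos _ _ hyt1_mem.2 hyt1_pos hyt1_max
    -- gradient difference bound
    have hD : ∀ k, |(ua a t + ∑ s ∈ Finset.Icc 1 t, ua a s) k
        - (ua a (t-1) + ∑ s ∈ Finset.Icc 1 (t-1), ua a s) k| ≤ Df a := by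
      intro k
      have hsplit : (∑ s ∈ Finset.Icc 1 t, ua a s) k
          = (∑ s ∈ Finset.Icc 1 (t-1), ua a s) k + ua a t k := by
        rw [Finset.sum_apply, Finset.sum_apply, ← ht',
          Finset.sum_Icc_succ_top (by omega : 1 ≤ t - 1 + 1), ht']
      rw [Pi.add_apply, Pi.add_apply, hsplit]
      have e3 : ua a t k + ((∑ s ∈ Finset.Icc 1 (t-1), ua a s) k + ua a t k)
          - (ua a (t-1) k + (∑ s ∈ Finset.Icc 1 (t-1), ua a s) k)
          = 2 * ua a t k - ua a (t-1) k := by ring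
      rw [e3]
      have h1 := hua_abs a k t htT'
      have h2 := hua_abs a k (t-1) (by omega)
      simp only [hDfdef]
      calc |2 * ua a t k - ua a (t-1) k| ≤ |2 * ua a t k| + |ua a (t-1) k| := abs_sub _ _
        _ ≤ 2 * xhat t a + xhat (t-1) a := by
            rw [abs_mul, abs_two]
            linarith
    have hstab := stab (by omega : 1 ≤ m) (y a t) (y a (t+1))
      hyt_pos hyt_mem.2 hyt1_pos hyt1_mem.2 hη2pos hη21 hk1 hk2 hD
    set β : ℝ := 1 - η a (t+1) / η a t with hβdef
    set N : ℝ := locNorm (y a t) (y a (t+1) - y a t) with hNdef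
    have hN0 : 0 ≤ N := Real.sqrt_nonneg _
    clear_value β N
    have hβ0 : 0 ≤ β := by
      have : η a (t+1) / η a t ≤ 1 := (div_le_one hη1pos).mpr hη21
      simp only [hβdef]
      linarith
    have hsqmlem : Real.sqrt m ≤ (m:ℝ) := by
      nlinarith [Real.sq_sqrt hmpos.le, Real.sqrt_nonneg (m:ℝ), hsqm1]
    have hcapsq : cap^2 ≤ 1/65536 := by nlinarith
    have hβb : β * ((m:ℝ)/8) ≤ 4 * cap^2 := by
      have h1 : εf a * (η a (t+1))^2 ≤ 4 * cap^2 := by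
        nlinarith [hε4 a, hεnn a, hη2pos, hη2cap, hcappos]
      have h2 : β * ((m:ℝ)/8) ≤ β * Q := mul_le_mul_of_nonneg_left hQm8 hβ0
      linarith [hβQ]
    have hγ : β * (1 + Real.sqrt m) ≤ 1/1024 := by
      have h1 : β ≤ 32 * cap^2 / (m:ℝ) := by
        rw [le_div_iff₀ hmpos]
        nlinarith
      have h2 : 1 + Real.sqrt m ≤ 2 * (m:ℝ) := by nlinarith
      calc β * (1 + Real.sqrt m) ≤ (32 * cap^2 / (m:ℝ)) * (2 * (m:ℝ)) := by
            apply mul_le_mul h1 h2 (by nlinarith) (by positivity)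
        _ = 64 * cap^2 := by field_simp; ring
        _ ≤ 1/1024 := by nlinarith
    have hstab2 : N ≤ (1024/1023) * (2 * (m:ℝ) * β + 2 * η a (t+1) * Df a) := by
      have h1 : N * (1 - β * (1 + Real.sqrt m))
          ≤ β * ((m:ℝ) + Real.sqrt m) + 2 * η a (t+1) * Df a := hstab
      have h2 : β * ((m:ℝ) + Real.sqrt m) ≤ 2 * (m:ℝ) * β := by nlinarith
      have c1 : N * (1 - β * (1 + Real.sqrt m))
          ≤ 2 * (m:ℝ) * β + 2 * η a (t+1) * Df a := by linarith
      have c2 : N * (1023/1024) ≤ N * (1 - β * (1 + Real.sqrt m)) :=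
        mul_le_mul_of_nonneg_left (by linarith) hN0
      linarith
    -- divide by sqrt eta
    have hsqη2 : 0 < Real.sqrt (η a (t+1)) := Real.sqrt_pos.mpr hη2pos
    have hss : Real.sqrt (η a (t+1)) * Real.sqrt (η a (t+1)) = η a (t+1) :=
      Real.mul_self_sqrt hη2pos.le
    have key1 : (1/Real.sqrt (η a (t+1))) * (2 * (m:ℝ) * β) ≤ 16 * (cap * Real.sqrt cap) * εf a := by
      have h1 : 2 * (m:ℝ) * β ≤ 16 * εf a * (η a (t+1))^2 := by
        have hx : β * Q ≤ εf a * (η a (t+1))^2 := hβQ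
        nlinarith [mul_le_mul_of_nonneg_left hQm8 hβ0]
      have h2 : (1/Real.sqrt (η a (t+1))) * (16 * εf a * (η a (t+1))^2)
          = 16 * εf a * (η a (t+1) * Real.sqrt (η a (t+1))) := by
        field_simp
        linear_combination (-(εf a)) * hss
      have h3 : η a (t+1) * Real.sqrt (η a (t+1)) ≤ cap * Real.sqrt cap := by
        apply mul_le_mul hη2cap (Real.sqrt_le_sqrt hη2cap) (Real.sqrt_nonneg _) hcappos.le
      calc (1/Real.sqrt (η a (t+1))) * (2 * (m:ℝ) * β)
          ≤ (1/Real.sqrt (η a (t+1))) * (16 * εf a * (η a (t+1))^2) := by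
            apply mul_le_mul_of_nonneg_left h1 (by positivity)
        _ = 16 * εf a * (η a (t+1) * Real.sqrt (η a (t+1))) := h2
        _ ≤ 16 * (cap * Real.sqrt cap) * εf a := by nlinarith [hεnn a, hη2pos, hsqη2]
    have key2 : (1/Real.sqrt (η a (t+1))) * (2 * η a (t+1) * Df a)
        ≤ 2 * Real.sqrt cap * Df a := by
      have h2 : (1/Real.sqrt (η a (t+1))) * (2 * η a (t+1) * Df a)
          = 2 * Real.sqrt (η a (t+1)) * Df a := by
        field_simp
        linear_combination (-(Df a)) * hss
      rw [h2]
      have h3 : Real.sqrt (η a (t+1)) ≤ Real.sqrt cap := Real.sqrt_le_sqrt hη2cap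
      nlinarith [hDnn a]
    calc (1/Real.sqrt (η a (t+1))) * N
        ≤ (1/Real.sqrt (η a (t+1))) * ((1024/1023) * (2 * (m:ℝ) * β + 2 * η a (t+1) * Df a)) := by
          apply mul_le_mul_of_nonneg_left hstab2 (by positivity)
      _ = (1024/1023) * ((1/Real.sqrt (η a (t+1))) * (2 * (m:ℝ) * β)
            + (1/Real.sqrt (η a (t+1))) * (2 * η a (t+1) * Df a)) := by ring
      _ ≤ (1024/1023) * (16 * (cap * Real.sqrt cap) * εf a + 2 * Real.sqrt cap * Df a) := by
          linarith [key1, key2]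
  -- sum up
  have hsum := Finset.sum_le_sum (fun a (_ : a ∈ Finset.univ) => hper a)
  have hsumx_t : ∑ a, xhat t a = 1 := (hxhat t (Finset.mem_Icc.mpr ⟨ht1, htT'⟩)).2
  have hsumx_t1 : ∑ a, xhat (t-1) a ≤ 1 := by
    rcases Nat.eq_zero_or_pos (t-1) with h0 | hp
    · rw [h0, hxhat0]
      simp
    · rw [(hxhat (t-1) (Finset.mem_Icc.mpr ⟨hp, by omega⟩)).2]
  have hsumD : ∑ a, Df a ≤ 3 := by
    simp only [hDfdef]
    rw [Finset.sum_add_distrib, ← Finset.mul_sum, hsumx_t]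
    linarith
  have hsumε : ∑ a, εf a ≤ 4 := by
    calc ∑ a, εf a ≤ ∑ a, 2 * (xhat t a + xhat (t-1) a) :=
          Finset.sum_le_sum fun a _ => hεlin a
      _ = 2 * ((∑ a, xhat t a) + ∑ a, xhat (t-1) a) := by
          rw [← Finset.mul_sum, Finset.sum_add_distrib]
      _ ≤ 4 := by rw [hsumx_t]; linarith
  calc ∑ a, (1/Real.sqrt (η a (t+1))) * locNorm (y a t) (y a (t+1) - y a t)
      ≤ ∑ a, (1024/1023) * (16 * (cap * Real.sqrt cap) * εf a + 2 * Real.sqrt cap * Df a) :=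
        hsum
    _ = (1024/1023) * (16 * (cap * Real.sqrt cap) * (∑ a, εf a)
          + 2 * Real.sqrt cap * (∑ a, Df a)) := by
        rw [← Finset.mul_sum, Finset.sum_add_distrib, ← Finset.mul_sum, ← Finset.mul_sum]
    _ ≤ 1/2 := by
        have hcs : cap * Real.sqrt cap ≤ (1/256) * (1/13) :=
          mul_le_mul hcap256 hsqcap hsqcap0 (by norm_num)
        have h1 : 16 * (cap * Real.sqrt cap) * (∑ a, εf a) ≤ 16 * ((1/256)*(1/13)) * 4 := by
          have hcs0 : 0 ≤ cap * Real.sqrt cap := by positivity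
          have hε0 : 0 ≤ ∑ a, εf a := Finset.sum_nonneg fun a _ => hεnn a
          nlinarith
        have h2 : 2 * Real.sqrt cap * (∑ a, Df a) ≤ 2 * (1/13) * 3 := by
          have hD0 : 0 ≤ ∑ a, Df a := Finset.sum_nonneg fun a _ => hDnn a
          nlinarith
        nlinarith
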